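/- Let α be a multiplier on the finite group G and (π,V,α) a projective representation with V ≠ 0. Then π is irreducible if and only if for every linear map f : V → V there is a scalar c ∈ ℂ with ⟨f⟩_π = c • 1_V. -/

import Mathlib

/-- For `V ≠ 0`, `π` is irreducible iff `⟨f⟩_π` is a scalar
multiple of the identity for every linear map `f : V → V`. -/
theorem stmt_17 {G : Type*} [Group G] [Fintype G]
    {V : Type*} [AddCommGroup V] [Module ℂ V] [FiniteDimensional ℂ V]
    [Nontrivial V]
    (α : G → G → ℂˣ)
    (hα : ∀ x y z : G, α x y * α (x * y) z = α x (y * z) * α y z)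
    (hα1 : ∀ x : G, α x 1 = 1 ∧ α 1 x = 1)
    (π : G → (Module.End ℂ V)ˣ)
    (hπ1 : π 1 = 1)
    (hπ : ∀ x y : G, (π x : Module.End ℂ V) * (π y : Module.End ℂ V)
        = (α x y : ℂ) • (π (x * y) : Module.End ℂ V))
    (avg : Module.End ℂ V → Module.End ℂ V)
    (havg : ∀ T : Module.End ℂ V, avg T = (Fintype.card G : ℂ)⁻¹ •
        ∑ g : G, (((π g)⁻¹ : (Module.End ℂ V)ˣ) : Module.End ℂ V) * T *
          (π g : Module.End ℂ V)) :
    (∀ W : Submodule ℂ V,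
        (∀ g : G, ∀ v ∈ W, (π g : Module.End ℂ V) v ∈ W) → W = ⊥ ∨ W = ⊤)
      ↔ (∀ T : Module.End ℂ V, ∃ c : ℂ, avg T = c • (1 : Module.End ℂ V)) := by
  classical
  -- inverse of π g in End via π g⁻¹
  have hinv : ∀ g : G, ((↑(π g)⁻¹ : Module.End ℂ V))
      = ((α g g⁻¹ : ℂ))⁻¹ • (π g⁻¹ : Module.End ℂ V) := by
    intro g
    have h := hπ g g⁻¹
    rw [mul_inv_cancel] at h
    rw [hπ1] at h
    have h2 : (↑(π g)⁻¹ : Module.End ℂ V) * ((π g : Module.End ℂ V) * (π g⁻¹ : Module.End ℂ V))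
        = (↑(π g)⁻¹ : Module.End ℂ V) * ((α g g⁻¹ : ℂ) • ((1 : (Module.End ℂ V)ˣ) : Module.End ℂ V)) := by
      rw [h]
    rw [← mul_assoc, Units.inv_mul, one_mul, Units.val_one, mul_smul_comm, mul_one] at h2
    rw [h2, smul_smul, inv_mul_cancel₀ (Units.ne_zero (α g g⁻¹)), one_smul]
  -- conjugation identity
  have hconj : ∀ g h : G, (π h : Module.End ℂ V) * (↑(π (g * h))⁻¹ : Module.End ℂ V)
      = (α g h : ℂ) • (↑(π g)⁻¹ : Module.End ℂ V) := by
    intro g h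
    have h1 := hπ g h
    have h2 : (↑(π g)⁻¹ : Module.End ℂ V) * ((π g : Module.End ℂ V) * (π h : Module.End ℂ V))
        * (↑(π (g * h))⁻¹ : Module.End ℂ V)
        = (↑(π g)⁻¹ : Module.End ℂ V) * ((α g h : ℂ) • (π (g * h) : Module.End ℂ V))
        * (↑(π (g * h))⁻¹ : Module.End ℂ V) := by rw [h1]
    rw [← mul_assoc, Units.inv_mul, one_mul] at h2
    rw [mul_smul_comm, smul_mul_assoc, mul_assoc, Units.mul_inv, mul_one] at h2
    exact h2
  constructor
  · -- irreducible → averages are scalar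
    intro hirr T
    set S := avg T with hS
    -- S commutes with every π h
    have hcomm : ∀ h : G, (π h : Module.End ℂ V) * S = S * (π h : Module.End ℂ V) := by
      intro h
      have key : ∀ g : G, (π h : Module.End ℂ V) *
          ((↑(π (g * h))⁻¹ : Module.End ℂ V) * T * (π (g * h) : Module.End ℂ V))
          = ((↑(π g)⁻¹ : Module.End ℂ V) * T * (π g : Module.End ℂ V)) * (π h : Module.End ℂ V) := by
        intro g
        calc (π h : Module.End ℂ V) * ((↑(π (g * h))⁻¹ : Module.End ℂ V) * T * (π (g * h) : Module.End ℂ V))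
            = ((π h : Module.End ℂ V) * (↑(π (g * h))⁻¹ : Module.End ℂ V)) * T * (π (g * h) : Module.End ℂ V) := by
              simp only [mul_assoc]
          _ = ((α g h : ℂ) • (↑(π g)⁻¹ : Module.End ℂ V)) * T * (π (g * h) : Module.End ℂ V) := by
              rw [hconj g h]
          _ = (α g h : ℂ) • ((↑(π g)⁻¹ : Module.End ℂ V) * T * (π (g * h) : Module.End ℂ V)) := by
              simp only [smul_mul_assoc]
          _ = (↑(π g)⁻¹ : Module.End ℂ V) * T * ((α g h : ℂ) • (π (g * h) : Module.End ℂ V)) := by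
              rw [mul_smul_comm, mul_assoc]
          _ = (↑(π g)⁻¹ : Module.End ℂ V) * T * ((π g : Module.End ℂ V) * (π h : Module.End ℂ V)) := by
              rw [← hπ g h]
          _ = ((↑(π g)⁻¹ : Module.End ℂ V) * T * (π g : Module.End ℂ V)) * (π h : Module.End ℂ V) := by
              simp only [mul_assoc]
      rw [hS, havg, mul_smul_comm, smul_mul_assoc, Finset.mul_sum, Finset.sum_mul]
      congr 1
      exact (Fintype.sum_equiv (Equiv.mulRight h)
        (fun g => ((↑(π g)⁻¹ : Module.End ℂ V) * T * (π g : Module.End ℂ V)) * (π h : Module.End ℂ V))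
        (fun g => (π h : Module.End ℂ V) * ((↑(π g)⁻¹ : Module.End ℂ V) * T * (π g : Module.End ℂ V)))
        (fun g => (key g).symm)).symm
    -- S has an eigenvalue
    obtain ⟨c, hc⟩ := Module.End.exists_eigenvalue S
    refine ⟨c, ?_⟩
    have hWinv : ∀ g : G, ∀ v ∈ S.eigenspace c, (π g : Module.End ℂ V) v ∈ S.eigenspace c := by
      intro g v hv
      rw [Module.End.mem_eigenspace_iff] at hv ⊢
      have h2 := congrArg (fun (A : Module.End ℂ V) => A v) (hcomm g)
      simp only [Module.End.mul_apply] at h2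
      rw [← h2, hv, map_smul]
    rcases hirr _ hWinv with h0 | htop
    · exact absurd h0 (Module.End.hasEigenvalue_iff.mp hc)
    · ext v
      have hv : v ∈ S.eigenspace c := htop ▸ Submodule.mem_top
      rw [Module.End.mem_eigenspace_iff] at hv
      simpa using hv
  · -- scalar averages → irreducible
    intro hsc W hW
    by_cases hbot : W = ⊥
    · exact Or.inl hbot
    right
    -- W is invariant under the inverses as well
    have hWinv : ∀ g : G, ∀ v ∈ W, (↑(π g)⁻¹ : Module.End ℂ V) v ∈ W := by
      intro g v hv
      rw [hinv]
      exact Submodule.smul_mem _ _ (hW g⁻¹ v hv)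
    -- projection onto W
    obtain ⟨W', hcompl⟩ := Submodule.exists_isCompl W
    set P : Module.End ℂ V := W.subtype ∘ₗ Submodule.projectionOnto W W' hcompl with hP
    have hPmem : ∀ v : V, P v ∈ W := fun v => (Submodule.projectionOnto W W' hcompl v).2
    have hPid : ∀ v ∈ W, P v = v := by
      intro v hv
      simp only [hP, LinearMap.comp_apply, Submodule.coe_subtype]
      rw [Submodule.projectionOnto_apply_left hcompl ⟨v, hv⟩]
    obtain ⟨c, hc⟩ := hsc P
    have hcard : (Fintype.card G : ℂ) ≠ 0 := by
      exact_mod_cast Fintype.card_ne_zero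
    -- avg P acts as identity on W
    have hfix : ∀ v ∈ W, avg P v = v := by
      intro v hv
      rw [havg]
      have hterm : ∀ g : G,
          ((↑(π g)⁻¹ : Module.End ℂ V) * P * (π g : Module.End ℂ V)) v = v := by
        intro g
        simp only [Module.End.mul_apply]
        rw [hPid _ (hW g v hv)]
        have h2 : ((↑(π g)⁻¹ : Module.End ℂ V) * (π g : Module.End ℂ V)) v
            = (1 : Module.End ℂ V) v := by rw [Units.inv_mul]
        simp only [Module.End.mul_apply, Module.End.one_apply] at h2
        exact h2
      rw [LinearMap.smul_apply, LinearMap.sum_apply]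
      simp only [hterm]
      rw [Finset.sum_const, Finset.card_univ, ← Nat.cast_smul_eq_nsmul ℂ, smul_smul,
        inv_mul_cancel₀ hcard, one_smul]
    -- avg P lands in W
    have hrange : ∀ v : V, avg P v ∈ W := by
      intro v
      rw [havg, LinearMap.smul_apply, LinearMap.sum_apply]
      refine Submodule.smul_mem _ _ (Submodule.sum_mem _ fun g _ => ?_)
      simp only [Module.End.mul_apply]
      exact hWinv g _ (hPmem _)
    -- c = 1
    obtain ⟨v0, hv0, hv0ne⟩ := (Submodule.ne_bot_iff W).mp hbot
    have hc1 : c = 1 := by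
      have h3 : c • v0 = v0 := by
        have := hfix v0 hv0
        rw [hc] at this
        simpa using this
      have h4 : (c - 1) • v0 = 0 := by rw [sub_smul, one_smul, h3, sub_self]
      rcases smul_eq_zero.mp h4 with h | h
      · exact sub_eq_zero.mp h
      · exact absurd h hv0ne
    -- hence W = ⊤
    rw [Submodule.eq_top_iff']
    intro v
    have h1 : avg P v = v := by
      rw [hc, hc1]
      simp
    rw [← h1]
    exact hrange v
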